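/- Let G be a finite group with unitary representation U on H, and suppose ρ is a perfectly asymmetric state on H with trivial stabilizer (the |G| orbit states are pairwise distinct and mutually orthogonal). Then for any state σ on any finite-dimensional H' carrying a representation V of G, there exists a G-covariant channel Φ : L(H) → L(H') (Φ(U(g)XU(g)†) = V(g)Φ(X)V(g)† for all g, X) with Φ(ρ) = σ. (Any asymmetric state is obtainable from a perfect reference frame by symmetric processing.) -/

import Mathlib

open Matrix
open scoped ComplexOrder Kronecker

/-- The extension `Φ ⊗ id_d` of a linear map on matrices to matrices over a
`d`-dimensional ancilla. -/
noncomputable def matExtend {n m : Type*} [Fintype n] [DecidableEq n]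
    [Fintype m] [DecidableEq m]
    (Φ : Matrix n n ℂ →ₗ[ℂ] Matrix m m ℂ) (d : ℕ)
    (X : Matrix (n × Fin d) (n × Fin d) ℂ) : Matrix (m × Fin d) (m × Fin d) ℂ :=
  Matrix.of fun p q => Φ (Matrix.of fun i j => X (i, p.2) (j, q.2)) p.1 q.1

/-- Complete positivity and trace preservation. -/
def IsCPTP {n m : Type*} [Fintype n] [DecidableEq n] [Fintype m] [DecidableEq m]
    (Φ : Matrix n n ℂ →ₗ[ℂ] Matrix m m ℂ) : Prop :=
  (∀ (d : ℕ) (X : Matrix (n × Fin d) (n × Fin d) ℂ),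
      X.PosSemidef → (matExtend Φ d X).PosSemidef) ∧
  (∀ X : Matrix n n ℂ, (Φ X).trace = X.trace)

set_option linter.unusedSectionVars false

open scoped MatrixOrder in
lemma posSemidef_exists_eq_conjTranspose_mul_self {n : Type*} [Fintype n] [DecidableEq n]
    {A : Matrix n n ℂ} (hA : A.PosSemidef) : ∃ B : Matrix n n ℂ, A = Bᴴ * B := by
  obtain ⟨X, hX, -, rfl⟩ :=
    CFC.exists_sqrt_of_isSelfAdjoint_of_quasispectrumRestricts hA.isHermitian
      (QuasispectrumRestricts.nnreal_of_nonneg hA.nonneg)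
  exact ⟨X, by rw [← star_eq_conjTranspose, hX.star_eq]⟩

section AuxLemmas

variable {n m : Type*} [Fintype n] [DecidableEq n] [Fintype m] [DecidableEq m]

/-- The "measure-and-prepare" building block: `X ↦ tr(M X) • τ`. -/
noncomputable def tpMap (M : Matrix n n ℂ) (τ : Matrix m m ℂ) :
    Matrix n n ℂ →ₗ[ℂ] Matrix m m ℂ where
  toFun X := (M * X).trace • τ
  map_add' X Y := by simp only [mul_add, trace_add, add_smul]
  map_smul' c X := by simp only [Matrix.mul_smul, trace_smul, RingHom.id_apply, smul_eq_mul,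
    smul_smul]

lemma tpMap_apply (M : Matrix n n ℂ) (τ : Matrix m m ℂ) (X : Matrix n n ℂ) :
    tpMap M τ X = (M * X).trace • τ := rfl

lemma posSemidef_sum {ι : Type*} (s : Finset ι) (f : ι → Matrix n n ℂ)
    (h : ∀ i ∈ s, (f i).PosSemidef) : (∑ i ∈ s, f i).PosSemidef :=
  Finset.sum_induction f _ (fun _ _ ha hb => ha.add hb) .zero h

lemma kron_conjTranspose (A : Matrix n n ℂ) (B : Matrix m m ℂ) :
    (A ⊗ₖ B)ᴴ = Aᴴ ⊗ₖ Bᴴ := by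
  ext p q
  simp [conjTranspose_apply, kroneckerMap_apply]

lemma PosSemidef.kron {A : Matrix n n ℂ} {B : Matrix m m ℂ}
    (hA : A.PosSemidef) (hB : B.PosSemidef) : (A ⊗ₖ B).PosSemidef := by
  obtain ⟨C, rfl⟩ := posSemidef_exists_eq_conjTranspose_mul_self hA
  obtain ⟨D, rfl⟩ := posSemidef_exists_eq_conjTranspose_mul_self hB
  rw [mul_kronecker_mul, ← kron_conjTranspose]
  exact posSemidef_conjTranspose_mul_self _

lemma posSemidef_real_smul {A : Matrix n n ℂ} (hA : A.PosSemidef) {c : ℝ} (hc : 0 ≤ c) :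
    ((c : ℂ) • A).PosSemidef := by
  refine ⟨?_, fun x => ?_⟩
  · have h : ((c : ℂ) • A)ᴴ = (starRingEnd ℂ) (c : ℂ) • Aᴴ := conjTranspose_smul _ _
    rw [IsHermitian, h, hA.1, Complex.conj_ofReal]
  · have h := mul_nonneg (show (0 : ℂ) ≤ (c : ℂ) by exact_mod_cast hc) (hA.2 x)
    convert h using 1
    simp only [Matrix.smul_apply, smul_eq_mul, Finsupp.mul_sum]
    exact Finsupp.sum_congr fun i _ => Finsupp.sum_congr fun j _ => by ring

lemma matExtend_add (Φ Ψ : Matrix n n ℂ →ₗ[ℂ] Matrix m m ℂ) (d : ℕ)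
    (X : Matrix (n × Fin d) (n × Fin d) ℂ) :
    matExtend (Φ + Ψ) d X = matExtend Φ d X + matExtend Ψ d X := by
  ext p q; simp [matExtend]

lemma matExtend_sum {ι : Type*} (s : Finset ι) (Φ : ι → (Matrix n n ℂ →ₗ[ℂ] Matrix m m ℂ))
    (d : ℕ) (X : Matrix (n × Fin d) (n × Fin d) ℂ) :
    matExtend (∑ i ∈ s, Φ i) d X = ∑ i ∈ s, matExtend (Φ i) d X := by
  ext p q; simp [matExtend, LinearMap.sum_apply, Matrix.sum_apply]

lemma matExtend_tpMap_kron {d : ℕ} (M : Matrix n n ℂ) (B : Matrix n n ℂ) (hB : M = Bᴴ * B)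
    (τ : Matrix m m ℂ) (X : Matrix (n × Fin d) (n × Fin d) ℂ) :
    matExtend (tpMap M τ) d X
      = τ ⊗ₖ (∑ k, (Matrix.of fun (a : Fin d) (p : n × Fin d) =>
          B k p.1 * (if p.2 = a then 1 else 0)) * X *
          (Matrix.of fun (a : Fin d) (p : n × Fin d) =>
          B k p.1 * (if p.2 = a then 1 else 0))ᴴ) := by
  ext p q
  show (tpMap M τ) (Matrix.of fun i j => X (i, p.2) (j, q.2)) p.1 q.1 = _
  rw [tpMap_apply, Matrix.smul_apply, smul_eq_mul, kroneckerMap_apply, mul_comm]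
  congr 1
  rw [hB]
  simp only [Matrix.trace, Matrix.diag, Matrix.mul_apply, conjTranspose_apply, Matrix.of_apply,
    Matrix.sum_apply, Fintype.sum_prod_type, mul_ite, ite_mul, mul_one, mul_zero, zero_mul,
    one_mul, Finset.sum_ite_eq, Finset.sum_ite_eq', Finset.mem_univ, if_true, star_mul',
    apply_ite (star : ℂ → ℂ), star_one, star_zero, Finset.mul_sum, Finset.sum_mul]
  have swap : ∀ f : n → n → n → ℂ,
      ∑ a : n, ∑ b : n, ∑ c : n, f a b c = ∑ c : n, ∑ a : n, ∑ b : n, f a b c := by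
    intro f
    calc ∑ a : n, ∑ b : n, ∑ c : n, f a b c
        = ∑ a : n, ∑ c : n, ∑ b : n, f a b c :=
          Finset.sum_congr rfl fun _ _ => Finset.sum_comm
      _ = ∑ c : n, ∑ a : n, ∑ b : n, f a b c := Finset.sum_comm
  rw [swap]
  exact Finset.sum_congr rfl fun k _ => Finset.sum_congr rfl fun i _ =>
    Finset.sum_congr rfl fun j _ => by ring

lemma matExtend_tpMap_posSemidef {d : ℕ} {M : Matrix n n ℂ} (hM : M.PosSemidef)
    {τ : Matrix m m ℂ} (hτ : τ.PosSemidef) {X : Matrix (n × Fin d) (n × Fin d) ℂ}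
    (hX : X.PosSemidef) : (matExtend (tpMap M τ) d X).PosSemidef := by
  obtain ⟨B, hB⟩ := posSemidef_exists_eq_conjTranspose_mul_self hM
  rw [matExtend_tpMap_kron M B hB τ X]
  exact PosSemidef.kron hτ (posSemidef_sum _ _ fun k _ => hX.mul_mul_conjTranspose_same _)

end AuxLemmas

section Supp
variable {n : Type*} [Fintype n] [DecidableEq n]

/-- The projection onto the support of a Hermitian matrix. -/
noncomputable def suppProj (A : Matrix n n ℂ) (hA : A.IsHermitian) : Matrix n n ℂ :=
  (hA.eigenvectorUnitary : Matrix n n ℂ) *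
    diagonal (fun i => if hA.eigenvalues i = 0 then (0 : ℂ) else 1) *
    star (hA.eigenvectorUnitary : Matrix n n ℂ)

lemma suppProj_conjTranspose (A : Matrix n n ℂ) (hA : A.IsHermitian) :
    (suppProj A hA)ᴴ = suppProj A hA := by
  unfold suppProj
  have hE : (star fun i => if hA.eigenvalues i = 0 then (0 : ℂ) else 1)
      = fun i => if hA.eigenvalues i = 0 then (0 : ℂ) else 1 := by
    funext i
    by_cases h : hA.eigenvalues i = 0 <;> simp [h]
  simp only [star_eq_conjTranspose, conjTranspose_mul, conjTranspose_conjTranspose,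
    diagonal_conjTranspose, hE, Matrix.mul_assoc]

lemma suppProj_mul_self (A : Matrix n n ℂ) (hA : A.IsHermitian) :
    suppProj A hA * suppProj A hA = suppProj A hA := by
  unfold suppProj
  have h1 : star (hA.eigenvectorUnitary : Matrix n n ℂ) *
      (hA.eigenvectorUnitary : Matrix n n ℂ) = 1 := UnitaryGroup.star_mul_self _
  have hE : (fun i => (if hA.eigenvalues i = 0 then (0 : ℂ) else 1) *
      (if hA.eigenvalues i = 0 then (0 : ℂ) else 1))
      = fun i => if hA.eigenvalues i = 0 then (0 : ℂ) else 1 := by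
    funext i
    by_cases h : hA.eigenvalues i = 0 <;> simp [h]
  simp only [Matrix.mul_assoc]
  rw [← Matrix.mul_assoc (star (hA.eigenvectorUnitary : Matrix n n ℂ))
    (hA.eigenvectorUnitary : Matrix n n ℂ), h1, Matrix.one_mul,
    ← Matrix.mul_assoc (diagonal _) (diagonal _), diagonal_mul_diagonal, hE]

lemma suppProj_posSemidef (A : Matrix n n ℂ) (hA : A.IsHermitian) :
    (suppProj A hA).PosSemidef := by
  have h : suppProj A hA = (suppProj A hA)ᴴ * suppProj A hA := by
    rw [suppProj_conjTranspose, suppProj_mul_self]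
  rw [h]
  exact posSemidef_conjTranspose_mul_self _

lemma suppProj_mul_eq (A : Matrix n n ℂ) (hA : A.IsHermitian) :
    suppProj A hA * A = A := by
  have h1 : star (hA.eigenvectorUnitary : Matrix n n ℂ) *
      (hA.eigenvectorUnitary : Matrix n n ℂ) = 1 := UnitaryGroup.star_mul_self _
  have hED : (fun i => (if hA.eigenvalues i = 0 then (0 : ℂ) else 1) *
      (RCLike.ofReal ∘ hA.eigenvalues) i) = RCLike.ofReal ∘ hA.eigenvalues := by
    funext i
    by_cases h : hA.eigenvalues i = 0 <;> simp [h, Function.comp]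
  have key : suppProj A hA * ((hA.eigenvectorUnitary : Matrix n n ℂ) *
        diagonal (RCLike.ofReal ∘ hA.eigenvalues) *
        star (hA.eigenvectorUnitary : Matrix n n ℂ))
      = (hA.eigenvectorUnitary : Matrix n n ℂ) *
        diagonal (RCLike.ofReal ∘ hA.eigenvalues) *
        star (hA.eigenvectorUnitary : Matrix n n ℂ) := by
    unfold suppProj
    simp only [Matrix.mul_assoc]
    rw [← Matrix.mul_assoc (star (hA.eigenvectorUnitary : Matrix n n ℂ))
      (hA.eigenvectorUnitary : Matrix n n ℂ), h1, Matrix.one_mul,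
      ← Matrix.mul_assoc (diagonal _) (diagonal _), diagonal_mul_diagonal, hED]
  calc suppProj A hA * A
      = suppProj A hA * ((hA.eigenvectorUnitary : Matrix n n ℂ) *
          diagonal (RCLike.ofReal ∘ hA.eigenvalues) *
          star (hA.eigenvectorUnitary : Matrix n n ℂ)) := by rw [← (show A = (hA.eigenvectorUnitary : Matrix n n ℂ) *
          diagonal (RCLike.ofReal ∘ hA.eigenvalues) *
          star (hA.eigenvectorUnitary : Matrix n n ℂ) from hA.spectral_theorem)]
    _ = (hA.eigenvectorUnitary : Matrix n n ℂ) *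
          diagonal (RCLike.ofReal ∘ hA.eigenvalues) *
          star (hA.eigenvectorUnitary : Matrix n n ℂ) := key
    _ = A := (show A = (hA.eigenvectorUnitary : Matrix n n ℂ) *
          diagonal (RCLike.ofReal ∘ hA.eigenvalues) *
          star (hA.eigenvectorUnitary : Matrix n n ℂ) from hA.spectral_theorem).symm

lemma suppProj_mul_eq_zero (A : Matrix n n ℂ) (hA : A.IsHermitian)
    {M : Matrix n n ℂ} (hAM : A * M = 0) : suppProj A hA * M = 0 := by
  have h1 : star (hA.eigenvectorUnitary : Matrix n n ℂ) *
      (hA.eigenvectorUnitary : Matrix n n ℂ) = 1 := UnitaryGroup.star_mul_self _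
  have h2 : (hA.eigenvectorUnitary : Matrix n n ℂ) *
      (diagonal (RCLike.ofReal ∘ hA.eigenvalues) *
        (star (hA.eigenvectorUnitary : Matrix n n ℂ) * M)) = 0 := by
    have h3 : (hA.eigenvectorUnitary : Matrix n n ℂ) *
        diagonal (RCLike.ofReal ∘ hA.eigenvalues) *
        star (hA.eigenvectorUnitary : Matrix n n ℂ) * M = 0 := by
      rw [← (show A = (hA.eigenvectorUnitary : Matrix n n ℂ) *
          diagonal (RCLike.ofReal ∘ hA.eigenvalues) *
          star (hA.eigenvectorUnitary : Matrix n n ℂ) from hA.spectral_theorem)]; exact hAM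
    simpa only [Matrix.mul_assoc] using h3
  have hDN : diagonal (RCLike.ofReal ∘ hA.eigenvalues) *
      (star (hA.eigenvectorUnitary : Matrix n n ℂ) * M) = 0 := by
    calc diagonal (RCLike.ofReal ∘ hA.eigenvalues) *
          (star (hA.eigenvectorUnitary : Matrix n n ℂ) * M)
        = (star (hA.eigenvectorUnitary : Matrix n n ℂ) *
            (hA.eigenvectorUnitary : Matrix n n ℂ)) *
          (diagonal (RCLike.ofReal ∘ hA.eigenvalues) *
            (star (hA.eigenvectorUnitary : Matrix n n ℂ) * M)) := by
          rw [h1, Matrix.one_mul]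
      _ = star (hA.eigenvectorUnitary : Matrix n n ℂ) *
          ((hA.eigenvectorUnitary : Matrix n n ℂ) *
            (diagonal (RCLike.ofReal ∘ hA.eigenvalues) *
              (star (hA.eigenvectorUnitary : Matrix n n ℂ) * M))) := Matrix.mul_assoc _ _ _
      _ = 0 := by rw [h2, Matrix.mul_zero]
  have hEN : diagonal (fun i => if hA.eigenvalues i = 0 then (0 : ℂ) else 1) *
      (star (hA.eigenvectorUnitary : Matrix n n ℂ) * M) = 0 := by
    ext i j
    have hthis := congrFun (congrFun hDN i) j
    rw [diagonal_mul] at hthis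
    rw [diagonal_mul]
    by_cases h : hA.eigenvalues i = 0
    · simp [h]
    · have hne : ((hA.eigenvalues i : ℝ) : ℂ) ≠ 0 := by simpa using h
      have hz : (star (hA.eigenvectorUnitary : Matrix n n ℂ) * M) i j = 0 := by
        have h4 : ((hA.eigenvalues i : ℝ) : ℂ) *
            (star (hA.eigenvectorUnitary : Matrix n n ℂ) * M) i j = 0 := hthis
        rcases mul_eq_zero.mp h4 with h' | h'
        · exact absurd h' hne
        · exact h'
      simp [h, hz]
  unfold suppProj
  simp only [Matrix.mul_assoc]
  rw [hEN, Matrix.mul_zero]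

end Supp

/-- Any state is obtainable from a perfect reference frame (a perfectly
asymmetric state with trivial stabilizer) by symmetric, i.e. G-covariant,
processing. -/
theorem perfect_reference_frame_generates_any_state
    {G : Type*} [Group G] [Fintype G]
    {H H' : Type*} [Fintype H] [DecidableEq H] [Fintype H'] [DecidableEq H']
    (U : G →* Matrix.unitaryGroup H ℂ) (V : G →* Matrix.unitaryGroup H' ℂ)
    (ρ : Matrix H H ℂ) (hρ : ρ.PosSemidef) (hρtr : ρ.trace = 1)
    (hdistinct : ∀ g h : G, g ≠ h →
      (U g : Matrix H H ℂ) * ρ * (U g : Matrix H H ℂ)ᴴ ≠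
        (U h : Matrix H H ℂ) * ρ * (U h : Matrix H H ℂ)ᴴ)
    (horth : ∀ g h : G, g ≠ h →
      ((U g : Matrix H H ℂ) * ρ * (U g : Matrix H H ℂ)ᴴ) *
        ((U h : Matrix H H ℂ) * ρ * (U h : Matrix H H ℂ)ᴴ) = 0)
    (σ : Matrix H' H' ℂ) (hσ : σ.PosSemidef) (hσtr : σ.trace = 1) :
    ∃ Φ : Matrix H H ℂ →ₗ[ℂ] Matrix H' H' ℂ,
      IsCPTP Φ ∧
      (∀ (g : G) (X : Matrix H H ℂ),
        Φ ((U g : Matrix H H ℂ) * X * (U g : Matrix H H ℂ)ᴴ) =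
          (V g : Matrix H' H' ℂ) * Φ X * (V g : Matrix H' H' ℂ)ᴴ) ∧
      Φ ρ = σ := by
  classical
  set u : G → Matrix H H ℂ := fun g => (U g : Matrix H H ℂ) with hu
  set v : G → Matrix H' H' ℂ := fun g => (V g : Matrix H' H' ℂ) with hv
  -- basic facts about the unitaries
  have hu_mul : ∀ g h : G, u g * u h = u (g * h) := by
    intro g h
    show (U g : Matrix H H ℂ) * (U h : Matrix H H ℂ) = (U (g * h) : Matrix H H ℂ)
    rw [_root_.map_mul]; rfl
  have hu_one : u 1 = 1 := by
    show (U (1 : G) : Matrix H H ℂ) = 1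
    rw [_root_.map_one]; rfl
  have hu_star : ∀ g : G, (u g)ᴴ = u g⁻¹ := by
    intro g
    show (U g : Matrix H H ℂ)ᴴ = (U g⁻¹ : Matrix H H ℂ)
    rw [_root_.map_inv, ← star_eq_conjTranspose]
    exact (UnitaryGroup.inv_val _).symm
  have huu : ∀ g : G, (u g)ᴴ * u g = 1 := by
    intro g; rw [hu_star, hu_mul, inv_mul_cancel, hu_one]
  have huu' : ∀ g : G, u g * (u g)ᴴ = 1 := by
    intro g; rw [hu_star, hu_mul, mul_inv_cancel, hu_one]
  have hmix : ∀ g h : G, (u g)ᴴ * u h = u (g⁻¹ * h) := by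
    intro g h; rw [hu_star, hu_mul]
  have hv_mul : ∀ g h : G, v g * v h = v (g * h) := by
    intro g h
    show (V g : Matrix H' H' ℂ) * (V h : Matrix H' H' ℂ) = (V (g * h) : Matrix H' H' ℂ)
    rw [_root_.map_mul]; rfl
  have hv_one : v 1 = 1 := by
    show (V (1 : G) : Matrix H' H' ℂ) = 1
    rw [_root_.map_one]; rfl
  have hvv : ∀ g : G, (v g)ᴴ * v g = 1 := by
    intro g
    show (V g : Matrix H' H' ℂ)ᴴ * (V g : Matrix H' H' ℂ) = 1
    rw [← star_eq_conjTranspose]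
    exact UnitaryGroup.star_mul_self _
  -- the support projection of ρ and its translates
  set P : Matrix H H ℂ := suppProj ρ hρ.1 with hP
  set Pg : G → Matrix H H ℂ := fun g => u g * P * (u g)ᴴ with hPg
  set τg : G → Matrix H' H' ℂ := fun g => v g * σ * (v g)ᴴ with hτg
  set Q : Matrix H H ℂ := ∑ g : G, Pg g with hQ
  set c : ℝ := ((Fintype.card G : ℝ))⁻¹ with hc
  set τavg : Matrix H' H' ℂ := (c : ℂ) • ∑ g : G, τg g with hτavg
  set Φ : Matrix H H ℂ →ₗ[ℂ] Matrix H' H' ℂ :=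
    (∑ g : G, tpMap (Pg g) (τg g)) + tpMap (1 - Q) τavg with hΦ
  -- properties of P
  have hPρ : P * ρ = ρ := suppProj_mul_eq ρ hρ.1
  have hker : ∀ {M : Matrix H H ℂ}, ρ * M = 0 → P * M = 0 :=
    fun h => suppProj_mul_eq_zero ρ hρ.1 h
  have hPherm : Pᴴ = P := suppProj_conjTranspose ρ hρ.1
  have hPP : P * P = P := suppProj_mul_self ρ hρ.1
  have hPpsd : P.PosSemidef := suppProj_posSemidef ρ hρ.1
  have hρg1 : ∀ k : G, k ≠ 1 → ρ * (u k * ρ * (u k)ᴴ) = 0 := by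
    intro k hk
    have h0 := horth 1 k (Ne.symm hk)
    have e1 : (U (1 : G) : Matrix H H ℂ) = 1 := hu_one
    have e2 : (U k : Matrix H H ℂ) = u k := rfl
    rw [e1, e2] at h0
    simpa using h0
  have hPρk : ∀ k : G, k ≠ 1 → P * (u k * ρ * (u k)ᴴ) = 0 := fun k hk => hker (hρg1 k hk)
  have hρkP : ∀ k : G, k ≠ 1 → (u k * ρ * (u k)ᴴ) * P = 0 := by
    intro k hk
    have h0 := congrArg conjTranspose (hPρk k hk)
    simpa [conjTranspose_mul, conjTranspose_conjTranspose, hPherm, hρ.1.eq,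
      Matrix.mul_assoc] using h0
  have hPuP : ∀ k : G, k ≠ 1 → P * (u k * P) = 0 := by
    intro k hk
    have h6 := hρkP k⁻¹ (inv_ne_one.mpr hk)
    have h7 : ρ * ((u k⁻¹)ᴴ * P) = 0 := by
      have h8 := congrArg (fun X => (u k⁻¹)ᴴ * X) h6
      simp only [Matrix.mul_zero, Matrix.mul_assoc] at h8
      rw [← Matrix.mul_assoc ((u k⁻¹)ᴴ) (u k⁻¹), huu, Matrix.one_mul] at h8
      simpa [Matrix.mul_assoc] using h8
    have h9 := hker h7
    rwa [hu_star, inv_inv] at h9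
  have hPgρ : ∀ k : G, Pg k * ρ = if k = 1 then ρ else 0 := by
    intro k
    by_cases hk : k = 1
    · subst hk
      simp only [hPg, hu_one, if_pos rfl, conjTranspose_one, Matrix.mul_one, Matrix.one_mul]
      exact hPρ
    · rw [if_neg hk]
      have expand : Pg k * ρ = u k * (P * ((u k)ᴴ * ρ * u k)) * (u k)ᴴ := by
        simp only [hPg, Matrix.mul_assoc]
        rw [huu' k, Matrix.mul_one]
      have hz : P * ((u k)ᴴ * ρ * u k) = 0 := by
        have h10 := hPρk k⁻¹ (inv_ne_one.mpr hk)
        rwa [← hu_star, conjTranspose_conjTranspose] at h10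
      rw [expand, hz, Matrix.mul_zero, Matrix.zero_mul]
  have hQρ : Q * ρ = ρ := by
    rw [hQ, Finset.sum_mul]
    calc ∑ g : G, Pg g * ρ = ∑ g : G, if g = 1 then ρ else 0 :=
          Finset.sum_congr rfl fun g _ => hPgρ g
      _ = ρ := by rw [Finset.sum_ite_eq' Finset.univ (1 : G) fun _ => ρ]; simp
  -- positivity facts
  have hPg_psd : ∀ g : G, (Pg g).PosSemidef := fun g => hPpsd.mul_mul_conjTranspose_same (u g)
  have hτg_psd : ∀ g : G, (τg g).PosSemidef := fun g => hσ.mul_mul_conjTranspose_same (v g)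
  have hPgPg : ∀ g : G, Pg g * Pg g = Pg g := by
    intro g
    simp only [hPg, Matrix.mul_assoc]
    rw [← Matrix.mul_assoc ((u g)ᴴ) (u g), huu, Matrix.one_mul, ← Matrix.mul_assoc P P, hPP]
  have hPgPh : ∀ g h : G, g ≠ h → Pg g * Pg h = 0 := by
    intro g h hgh
    have hk : g⁻¹ * h ≠ 1 := fun hcon => hgh (inv_mul_eq_one.mp hcon)
    simp only [hPg, Matrix.mul_assoc]
    rw [← Matrix.mul_assoc ((u g)ᴴ) (u h), hmix]
    rw [show P * (u (g⁻¹ * h) * (P * (u h)ᴴ)) = (P * (u (g⁻¹ * h) * P)) * (u h)ᴴ by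
      simp only [Matrix.mul_assoc]]
    rw [hPuP _ hk, Matrix.zero_mul, Matrix.mul_zero]
  have hQQ : Q * Q = Q := by
    rw [hQ, Finset.sum_mul_sum]
    calc (∑ g : G, ∑ h : G, Pg g * Pg h) = ∑ g : G, Pg g := by
          refine Finset.sum_congr rfl fun g _ => ?_
          rw [Finset.sum_eq_single g (fun h _ hne => hPgPh g h (Ne.symm hne))
            (fun hg => absurd (Finset.mem_univ g) hg)]
          exact hPgPg g
      _ = Q := hQ.symm
  have hQherm : Qᴴ = Q := by
    rw [hQ, conjTranspose_sum]
    refine Finset.sum_congr rfl fun g _ => ?_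
    simp only [hPg, conjTranspose_mul, conjTranspose_conjTranspose, hPherm, Matrix.mul_assoc]
  have h1Q_psd : (1 - Q).PosSemidef := by
    have hh : (1 - Q)ᴴ * (1 - Q) = 1 - Q := by
      rw [conjTranspose_sub, conjTranspose_one, hQherm, Matrix.sub_mul, Matrix.one_mul,
        Matrix.mul_sub, Matrix.mul_one, hQQ]
      abel
    rw [← hh]
    exact posSemidef_conjTranspose_mul_self _
  have hτavg_psd : τavg.PosSemidef := by
    rw [hτavg]
    refine posSemidef_real_smul (posSemidef_sum _ _ fun g _ => hτg_psd g) ?_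
    rw [hc]; positivity
  -- trace facts
  have hτg_tr : ∀ g : G, (τg g).trace = 1 := by
    intro g
    simp only [hτg]
    calc (v g * σ * (v g)ᴴ).trace = ((v g)ᴴ * v g * σ).trace := trace_mul_cycle (v g) σ ((v g)ᴴ)
      _ = σ.trace := by rw [hvv, Matrix.one_mul]
      _ = 1 := hσtr
  have hcard : (Fintype.card G : ℂ) ≠ 0 := Nat.cast_ne_zero.mpr Fintype.card_ne_zero
  have hτavg_tr : τavg.trace = 1 := by
    rw [hτavg, trace_smul, trace_sum]
    rw [Finset.sum_congr rfl fun g _ => hτg_tr g]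
    simp only [Finset.sum_const, Finset.card_univ, nsmul_eq_mul, mul_one, smul_eq_mul]
    rw [hc]
    push_cast
    exact inv_mul_cancel₀ hcard
  refine ⟨Φ, ⟨?_, ?_⟩, ?_, ?_⟩
  · -- complete positivity
    intro d X hX
    rw [hΦ, matExtend_add, matExtend_sum]
    refine Matrix.PosSemidef.add (posSemidef_sum _ _ fun g _ => ?_) ?_
    · exact matExtend_tpMap_posSemidef (hPg_psd g) (hτg_psd g) hX
    · exact matExtend_tpMap_posSemidef h1Q_psd hτavg_psd hX
  · -- trace preservation
    intro X
    rw [hΦ]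
    simp only [LinearMap.add_apply, LinearMap.sum_apply, tpMap_apply]
    rw [trace_add, trace_sum]
    have e1 : ∑ g : G, ((Pg g * X).trace • τg g).trace = (Q * X).trace := by
      calc ∑ g : G, ((Pg g * X).trace • τg g).trace
          = ∑ g : G, (Pg g * X).trace := by
            refine Finset.sum_congr rfl fun g _ => ?_
            rw [trace_smul, hτg_tr g, smul_eq_mul, mul_one]
        _ = (Q * X).trace := by rw [hQ, Finset.sum_mul, trace_sum]
    have e2 : (((1 - Q) * X).trace • τavg).trace = ((1 - Q) * X).trace := by
      rw [trace_smul, hτavg_tr, smul_eq_mul, mul_one]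
    rw [e1, e2, ← trace_add, ← Matrix.add_mul]
    rw [show Q + (1 - Q) = 1 by abel, Matrix.one_mul]
  · -- covariance
    intro g X
    show Φ (u g * X * (u g)ᴴ) = v g * Φ X * (v g)ᴴ
    rw [hΦ]
    simp only [LinearMap.add_apply, LinearMap.sum_apply, tpMap_apply]
    have tr_conj : ∀ M : Matrix H H ℂ,
        (M * (u g * X * (u g)ᴴ)).trace = ((u g)ᴴ * M * u g * X).trace := by
      intro M
      calc (M * (u g * X * (u g)ᴴ)).trace
          = ((M * u g * X) * (u g)ᴴ).trace := by simp only [Matrix.mul_assoc]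
        _ = ((u g)ᴴ * (M * u g * X)).trace := trace_mul_comm _ _
        _ = ((u g)ᴴ * M * u g * X).trace := by simp only [Matrix.mul_assoc]
    have hconjPg : ∀ k : G, (u g)ᴴ * Pg k * u g = Pg (g⁻¹ * k) := by
      intro k
      have e1 : u (g⁻¹ * k) = (u g)ᴴ * u k := (hmix g k).symm
      have e2 : (u (g⁻¹ * k))ᴴ = (u k)ᴴ * u g := by
        rw [e1, conjTranspose_mul, conjTranspose_conjTranspose]
      simp only [hPg]
      rw [e2, e1]
      simp only [Matrix.mul_assoc]
    have hsum : ∑ k : G, (Pg k * (u g * X * (u g)ᴴ)).trace • τg k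
        = v g * (∑ k : G, (Pg k * X).trace • τg k) * (v g)ᴴ := by
      calc ∑ k : G, (Pg k * (u g * X * (u g)ᴴ)).trace • τg k
          = ∑ k : G, (Pg (g⁻¹ * k) * X).trace • τg k := by
            refine Finset.sum_congr rfl fun k _ => ?_
            rw [tr_conj, hconjPg]
        _ = ∑ k : G, (Pg k * X).trace • τg (g * k) := by
            refine Fintype.sum_equiv (Equiv.mulLeft g⁻¹) _ _ fun k => ?_
            simp [mul_inv_cancel_left]
        _ = ∑ k : G, (Pg k * X).trace • (v g * τg k * (v g)ᴴ) := by
            refine Finset.sum_congr rfl fun k _ => ?_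
            congr 1
            simp only [hτg, ← hv_mul, conjTranspose_mul, Matrix.mul_assoc]
        _ = v g * (∑ k : G, (Pg k * X).trace • τg k) * (v g)ᴴ := by
            rw [Finset.mul_sum, Finset.sum_mul]
            refine Finset.sum_congr rfl fun k _ => ?_
            rw [mul_smul_comm, smul_mul_assoc]
    have hQconj : (u g)ᴴ * (1 - Q) * u g = 1 - Q := by
      have hQc : (u g)ᴴ * Q * u g = Q := by
        rw [hQ, Finset.mul_sum, Finset.sum_mul]
        calc ∑ k : G, (u g)ᴴ * Pg k * u g = ∑ k : G, Pg (g⁻¹ * k) :=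
              Finset.sum_congr rfl fun k _ => hconjPg k
          _ = ∑ k : G, Pg k := by
              refine Fintype.sum_equiv (Equiv.mulLeft g⁻¹) _ _ fun k => ?_
              simp
      rw [Matrix.mul_sub, Matrix.mul_one, Matrix.sub_mul, huu, hQc]
    have hτavg_conj : v g * τavg * (v g)ᴴ = τavg := by
      rw [hτavg, mul_smul_comm, smul_mul_assoc]
      congr 1
      rw [Finset.mul_sum, Finset.sum_mul]
      calc ∑ k : G, v g * τg k * (v g)ᴴ = ∑ k : G, τg (g * k) := by
            refine Finset.sum_congr rfl fun k _ => ?_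
            simp only [hτg, ← hv_mul, conjTranspose_mul, Matrix.mul_assoc]
        _ = ∑ k : G, τg k := by
            refine Fintype.sum_equiv (Equiv.mulLeft g) _ _ fun k => ?_
            simp [inv_mul_cancel_left]
    rw [hsum, tr_conj (1 - Q), hQconj, Matrix.mul_add, Matrix.add_mul]
    congr 1
    rw [mul_smul_comm, smul_mul_assoc, hτavg_conj]
  · -- Φ ρ = σ
    rw [hΦ]
    simp only [LinearMap.add_apply, LinearMap.sum_apply, tpMap_apply]
    have hrest : (1 - Q) * ρ = 0 := by
      rw [Matrix.sub_mul, Matrix.one_mul, hQρ, sub_self]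
    rw [hrest, trace_zero, zero_smul, add_zero]
    calc ∑ k : G, (Pg k * ρ).trace • τg k
        = ∑ k : G, (if k = 1 then ρ else (0 : Matrix H H ℂ)).trace • τg k :=
          Finset.sum_congr rfl fun k _ => by rw [hPgρ k]
      _ = σ := by
          rw [Finset.sum_eq_single 1
            (fun k _ hk => by rw [if_neg hk, trace_zero, zero_smul])
            (fun h => absurd (Finset.mem_univ 1) h)]
          rw [if_pos rfl, hρtr, one_smul]
          simp only [hτg, hv_one]
          simp
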